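/- Let n ≥ 3 be odd, 0 ≤ k ≤ n-2, and let d_0, ..., d_{n-2} ∈ ℝ. Let Γ ⊆ E(1) be the subgroup generated by D_0, ..., D_{n-2}, where D_k = (1, d_k) and D_i = (-1, d_i) for i ≠ k. Then there exists a surjective group homomorphism Φ : F(n-1, 2n) → Γ such that Φ(a_i) = D_i for all i = 0, ..., n-2. -/

import Mathlib

@[ext] structure E1 where
  ε : ℝˣ
  d : ℝ

namespace E1

instance : Mul E1 := ⟨fun a b => ⟨a.ε * b.ε, (a.ε : ℝ) * b.d + a.d⟩⟩
instance : One E1 := ⟨⟨1, 0⟩⟩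
instance : Inv E1 := ⟨fun a => ⟨a.ε⁻¹, -(((a.ε⁻¹ : ℝˣ) : ℝ) * a.d)⟩⟩

@[simp] lemma mul_def (a b : E1) : a * b = ⟨a.ε * b.ε, (a.ε : ℝ) * b.d + a.d⟩ := rfl
@[simp] lemma one_def : (1 : E1) = ⟨1, 0⟩ := rfl
@[simp] lemma inv_def (a : E1) : a⁻¹ = ⟨a.ε⁻¹, -(((a.ε⁻¹ : ℝˣ) : ℝ) * a.d)⟩ := rfl

instance : Group E1 where
  mul_assoc a b c := by ext <;> simp [mul_assoc] <;> ring
  one_mul a := by ext <;> simp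
  mul_one a := by ext <;> simp
  inv_mul_cancel a := by ext <;> simp

end E1

/-- epsilon as a monoid hom -/
def epsHom : E1 →* ℝˣ where
  toFun := E1.ε
  map_one' := rfl
  map_mul' _ _ := rfl

def epsR : E1 →* ℝ := (Units.coeHom ℝ).comp epsHom

@[simp] lemma epsR_apply (x : E1) : epsR x = (x.ε : ℝ) := rfl

def seqE (r : ℕ) (D : ℕ → E1) : ℕ → E1
  | v =>
    if _ : v < r then D v
    else ((List.range r).attach.map (fun j => seqE r D (v - r + j.1))).prod
decreasing_by
  have := List.mem_range.mp j.2
  omega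

lemma seqE_lt {r : ℕ} {D : ℕ → E1} {v : ℕ} (h : v < r) : seqE r D v = D v := by
  rw [seqE, dif_pos h]

lemma seqE_rec (r : ℕ) (D : ℕ → E1) (v : ℕ) :
    seqE r D (v + r) = ((List.range r).map (fun j => seqE r D (v + j))).prod := by
  rw [seqE, dif_neg (by omega)]
  simp only [Nat.add_sub_cancel]
  exact congrArg List.prod (List.attach_map_val (l := List.range r) (f := fun x => seqE r D (v + x)))

lemma seqE_star (r : ℕ) (D : ℕ → E1) (v : ℕ) :
    seqE r D (v + r) * seqE r D (v + r) = seqE r D v * seqE r D (v + r + 1) := by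
  have h1 : ((List.range (r+1)).map (fun j => seqE r D (v + j))).prod
      = ((List.range r).map (fun j => seqE r D (v + j))).prod * seqE r D (v + r) := by
    rw [List.range_succ, List.map_append, List.prod_append]; simp
  have h2 : ((List.range (r+1)).map (fun j => seqE r D (v + j))).prod
      = seqE r D v * ((List.range r).map (fun j => seqE r D (v + 1 + j))).prod := by
    rw [List.range_succ_eq_map, List.map_cons, List.prod_cons, List.map_map]
    refine congrArg (seqE r D (v + 0) * ·) (congrArg List.prod ?_)
    refine List.map_congr_left fun j hj => ?_
    simp only [Function.comp_apply]
    congr 1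
    omega
  have h3 : v + r + 1 = v + 1 + r := by omega
  rw [h3]
  nth_rewrite 1 [seqE_rec r D v]
  rw [← h1, h2, seqE_rec r D (v+1)]

section Aux

variable {r k : ℕ} {D : ℕ → E1} {d : ℕ → ℝ}

/-- real epsilon of the sequence -/
noncomputable def Ee (r : ℕ) (D : ℕ → E1) (v : ℕ) : ℝ := ((seqE r D v).ε : ℝ)

/-- translation part of the sequence -/
noncomputable def Tt (r : ℕ) (D : ℕ → E1) (v : ℕ) : ℝ := (seqE r D v).d

variable (hk : k < r) (hr : 2 ≤ r)
  (hDk : D k = ⟨1, d k⟩) (hDi : ∀ i, i < r → i ≠ k → D i = ⟨-1, d i⟩)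

include hk hDk hDi in
lemma Ee_base : ∀ v < r, Ee r D v = if v = k then 1 else -1 := by
  intro v hv
  rw [Ee, seqE_lt hv]
  by_cases h : v = k
  · subst h; rw [hDk]; simp
  · rw [hDi v hv h]; simp [h]

include hk hDk hDi in
lemma Ee_pm : ∀ v, Ee r D v = 1 ∨ Ee r D v = -1 := by
  intro v
  induction v using Nat.strong_induction_on with
  | _ v ih =>
    by_cases hv : v < r
    · rw [Ee_base hk hDk hDi v hv]
      by_cases h : v = k <;> simp [h]
    · have hvr : v = (v - r) + r := by omega
      rw [Ee, hvr, seqE_rec]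
      have := map_list_prod epsR ((List.range r).map (fun j => seqE r D (v - r + j)))
      simp only [epsR_apply] at this
      rw [this, List.map_map]
      refine List.prod_induction (fun x : ℝ => x = 1 ∨ x = -1) (fun a b ha hb => ?_) (Or.inl rfl) ?_
      · rcases ha with ha | ha <;> rcases hb with hb | hb <;>
          [left; right; right; left] <;> rw [ha, hb] <;> ring
      · intro x hx
        simp only [List.mem_map, List.mem_range] at hx
        obtain ⟨j, hj, rfl⟩ := hx
        have : v - r + j < v := by omega
        exact ih _ this

include hk hDk hDi in
lemma Ee_sq : ∀ v, Ee r D v * Ee r D v = 1 := by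
  intro v
  rcases Ee_pm hk hDk hDi v with h | h <;> rw [h] <;> norm_num

lemma star_e (v : ℕ) :
    Ee r D (v + r) * Ee r D (v + r) = Ee r D v * Ee r D (v + r + 1) := by
  exact congrArg (fun x : E1 => ((x.ε : ℝ))) (seqE_star r D v)

lemma star_d (v : ℕ) :
    Ee r D (v + r) * Tt r D (v + r) + Tt r D (v + r)
      = Ee r D v * Tt r D (v + r + 1) + Tt r D v := by
  exact congrArg E1.d (seqE_star r D v)

include hk hDk hDi in
lemma Ee_per : ∀ v, Ee r D (v + r + 1) = Ee r D v := by
  intro v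
  have h1 := star_e (r := r) (D := D) v
  rw [Ee_sq hk hDk hDi (v + r)] at h1
  have h2 := Ee_sq hk hDk hDi v
  have hne : Ee r D v ≠ 0 := by
    rcases Ee_pm hk hDk hDi v with h | h <;> rw [h] <;> norm_num
  have h3 : Ee r D v * (Ee r D (v + r + 1) - Ee r D v) = 0 := by nlinarith [h1, h2]
  rcases mul_eq_zero.mp h3 with h | h
  · exact absurd h hne
  · linarith

include hk hDk hDi in
lemma Ee_mod : ∀ v, Ee r D v = Ee r D (v % (r + 1)) := by
  intro v
  induction v using Nat.strong_induction_on with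
  | _ v ih =>
    by_cases hv : v < r + 1
    · rw [Nat.mod_eq_of_lt hv]
    · have h1 : v = (v - (r+1)) + r + 1 := by omega
      have h2 : v % (r+1) = (v - (r+1)) % (r+1) := by
        rw [Nat.mod_eq_sub_mod (by omega)]
      rw [h2, ← ih (v - (r+1)) (by omega)]
      conv_lhs => rw [h1]
      exact Ee_per hk hDk hDi _

include hk hDk hDi in
lemma Ee_r (hre : Even r) : Ee r D r = -1 := by
  have h0 := seqE_rec r D 0
  simp only [zero_add] at h0
  have hprod : Ee r D r = ((List.range r).map (fun j => Ee r D j)).prod := by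
    have h2 := map_list_prod epsR ((List.range r).map (fun j => seqE r D j))
    simp only [epsR_apply] at h2
    rw [Ee, h0, h2, List.map_map]
    rfl
  have key : ∀ M, M ≤ r → ((List.range M).map (fun j => Ee r D j)).prod
      = if k < M then -((-1 : ℝ)^M) else (-1 : ℝ)^M := by
    intro M
    induction M with
    | zero => intro _; simp
    | succ M ihM =>
      intro hM
      rw [List.range_succ, List.map_append, List.prod_append, ihM (by omega)]
      simp only [List.map_cons, List.map_nil, List.prod_cons, List.prod_nil, mul_one]
      have hEM : Ee r D M = if M = k then 1 else -1 := Ee_base hk hDk hDi M (by omega)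
      by_cases h1 : M = k
      · subst h1; rw [if_neg (lt_irrefl _), if_pos (Nat.lt_succ_self _), hEM, if_pos rfl]
        rw [pow_succ]; ring
      · rw [hEM, if_neg h1]
        by_cases h2 : k < M
        · rw [if_pos h2, if_pos (by omega), pow_succ]; ring
        · rw [if_neg h2, if_neg (by omega), pow_succ]
  rw [hprod, key r le_rfl, if_pos hk]
  rw [hre.neg_one_pow]

include hk hDk hDi in
lemma Ee_notk (hre : Even r) : ∀ v, v % (r+1) ≠ k → Ee r D v = -1 := by
  intro v hvk
  rw [Ee_mod hk hDk hDi v]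
  have hlt : v % (r+1) < r + 1 := Nat.mod_lt _ (by omega)
  by_cases h : v % (r+1) < r
  · rw [Ee_base hk hDk hDi _ h, if_neg hvk]
  · have h2 : v % (r+1) = r := by omega
    rw [h2]; exact Ee_r hk hDk hDi hre

include hk hDk hDi in
lemma Ee_KL (hre : Even r) : ∀ v, (1 + Ee r D v) * (1 + Ee r D (v + r)) = 0 := by
  intro v
  rcases Ee_pm hk hDk hDi v with h | h
  · have hvk : v % (r+1) = k := by
      by_contra hc
      rw [Ee_notk hk hDk hDi hre v hc] at h; norm_num at h
    have h2 : (v + r) % (r+1) ≠ k := by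
      have h3 : (v + r) % (r+1) = (k + r) % (r+1) := by
        rw [Nat.add_mod, hvk]
        conv_rhs => rw [Nat.add_mod, Nat.mod_eq_of_lt (show k < r+1 by omega)]
      rw [h3]
      by_cases h0 : k = 0
      · subst h0; rw [Nat.zero_add, Nat.mod_eq_of_lt (by omega)]; omega
      · rw [Nat.mod_eq_sub_mod (by omega), Nat.mod_eq_of_lt (by omega)]; omega
    rw [h, Ee_notk hk hDk hDi hre (v + r) h2]; ring
  · rw [h]; ring

include hk hDk hDi in
lemma Qq_anti (hre : Even r) : ∀ v,
    (1 + Ee r D (v + r + 1)) * Tt r D (v + r + 1) = -((1 + Ee r D v) * Tt r D v) := by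
  intro v
  have A := star_d (r := r) (D := D) v
  have B := Ee_sq hk hDk hDi v
  have C := Ee_KL hk hDk hDi hre v
  have P := Ee_per hk hDk hDi v
  rw [P]
  linear_combination (-(1 + Ee r D v)) * A + (-(Tt r D (v + r + 1))) * B + (Tt r D (v + r)) * C

include hk hDk hDi in
lemma seqE_two_per (hre : Even r) : ∀ v, seqE r D (v + (2*r+2)) = seqE r D v := by
  intro v
  have e4 : Ee r D (v + (2*r+2)) = Ee r D v := by
    have h1 : v + (2*r+2) = (v + r + 1) + r + 1 := by omega
    rw [h1, Ee_per hk hDk hDi (v+r+1), Ee_per hk hDk hDi v]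
  have A1 := star_d (r := r) (D := D) v
  have A2 := star_d (r := r) (D := D) (v + r + 1)
  have HQ := Qq_anti hk hDk hDi hre (v + r)
  have B := Ee_sq hk hDk hDi v
  have C := Ee_KL hk hDk hDi hre v
  have P1 := Ee_per hk hDk hDi v
  have i1 : v + r + 1 + r = v + r + r + 1 := by omega
  have i2 : v + r + 1 + r + 1 = v + (2*r+2) := by omega
  rw [i2, i1, P1] at A2
  refine E1.ext ?_ ?_
  · exact Units.ext e4
  · show Tt r D (v + (2*r+2)) = Tt r D v
    linear_combination (-(Ee r D v)) * A2 + (-(Tt r D (v + (2*r+2)))) * B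
      + (Ee r D v) * HQ + A1 + (-(Tt r D (v + r))) * C

include hk hDk hDi in
lemma seqE_mod (hre : Even r) : ∀ v, seqE r D (v % (2*r+2)) = seqE r D v := by
  intro v
  induction v using Nat.strong_induction_on with
  | _ v ih =>
    by_cases hv : v < 2*r+2
    · rw [Nat.mod_eq_of_lt hv]
    · have h2 : v % (2*r+2) = (v - (2*r+2)) % (2*r+2) := Nat.mod_eq_sub_mod (by omega)
      have h3 := seqE_two_per hk hDk hDi hre (v - (2*r+2))
      rw [show (v - (2*r+2)) + (2*r+2) = v from by omega] at h3
      rw [h2, ih _ (by omega), h3]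

end Aux

lemma seqE_mem {r : ℕ} {D : ℕ → E1} (S : Set E1) (hS : ∀ i < r, D i ∈ S) :
    ∀ v, seqE r D v ∈ Subgroup.closure S := by
  intro v
  induction v using Nat.strong_induction_on with
  | _ v ih =>
    by_cases hv : v < r
    · rw [seqE_lt hv]; exact Subgroup.subset_closure (hS v hv)
    · rw [show v = (v - r) + r from by omega, seqE_rec]
      refine list_prod_mem ?_
      intro x hx
      simp only [List.mem_map, List.mem_range] at hx
      obtain ⟨j, hj, rfl⟩ := hx
      exact ih _ (by omega)


/-- The Fibonacci relation `a_i a_{i+1} ⋯ a_{i+r-1} = a_{i+r}` (indices mod `m`),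
written as a relator in the free group on `ZMod m`. -/
def fibonacciRelation (r m : ℕ) (i : ZMod m) : FreeGroup (ZMod m) :=
  ((List.range r).map (fun j => FreeGroup.of (i + (j : ZMod m)))).prod *
    (FreeGroup.of (i + (r : ZMod m)))⁻¹

/-- The Fibonacci group `F(r, m) = ⟨a_0, …, a_{m-1} ∣ a_i a_{i+1} ⋯ a_{i+r-1} = a_{i+r}⟩`. -/
abbrev FibonacciGroup (r m : ℕ) : Type :=
  PresentedGroup (Set.range (fibonacciRelation r m))


/-- For odd `n ≥ 3`, `0 ≤ k ≤ n-2`, and reals `d 0, …, d (n-2)`, with `D k = (1, d k)` and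
`D i = (-1, d i)` for `i ≠ k`, `i ≤ n-2`, there is a homomorphism from the Fibonacci group
`F(n-1, 2n)` sending `a i` to `D i` for `0 ≤ i ≤ n-2`, surjective onto the subgroup
generated by `D 0, …, D (n-2)`. -/
theorem exists_epi_onto_one_dim_cryst_general (n : ℕ) (hn : 3 ≤ n) (hodd : Odd n)
    (k : ℕ) (hk : k ≤ n - 2) (d : ℕ → ℝ) (D : ℕ → E1)
    (hDk : D k = ⟨1, d k⟩)
    (hDi : ∀ i : ℕ, i ≤ n - 2 → i ≠ k → D i = ⟨-1, d i⟩) :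
    ∃ Φ : FibonacciGroup (n - 1) (2 * n) →* E1,
      (∀ i : ℕ, i ≤ n - 2 → Φ (PresentedGroup.of ((i : ZMod (2 * n)))) = D i) ∧
      Φ.range = Subgroup.closure {x : E1 | ∃ i : ℕ, i ≤ n - 2 ∧ D i = x} := by
  obtain ⟨r, rfl⟩ : ∃ r, n = r + 1 := ⟨n - 1, by omega⟩
  have hr2 : 2 ≤ r := by omega
  have hkr : k < r := by omega
  have hre : Even r := by
    rcases Nat.even_or_odd r with h | h
    · exact h
    · exfalso; rcases hodd with ⟨t, ht⟩; rcases h with ⟨u, hu⟩; omega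
  have hDi' : ∀ i, i < r → i ≠ k → D i = ⟨-1, d i⟩ := fun i hi hik => hDi i (by omega) hik
  haveI : NeZero (2 * (r + 1)) := ⟨by omega⟩
  set m := 2 * (r + 1) with hm
  have hm2 : 2 * r + 2 = m := by omega
  set g : ZMod m → E1 := fun z => seqE r D z.val with hg
  have hmod : ∀ v, seqE r D (v % m) = seqE r D v := by
    intro v
    have := seqE_mod hkr hDk hDi' hre v
    rwa [hm2] at this
  have hgj : ∀ (i : ZMod m) (j : ℕ), j < m → g (i + (j : ZMod m)) = seqE r D (i.val + j) := by
    intro i j hj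
    have h1 : (i + (j : ZMod m)).val = (i.val + j) % m := by
      rw [ZMod.val_add, ZMod.val_natCast, Nat.mod_eq_of_lt hj]
    show seqE r D ((i + (j : ZMod m)).val) = _
    rw [h1, hmod]
  have hrel : ∀ x ∈ Set.range (fibonacciRelation r m), FreeGroup.lift g x = 1 := by
    rintro _ ⟨i, rfl⟩
    have hdo : ∀ t : List ℕ,
        (do let a ← t; pure ((a : ZMod m)) : List (ZMod m)) = t.map (fun a : ℕ => (a : ZMod m)) := by
      intro t
      induction t with
      | nil => rfl
      | cons a t ih => simp_all
    rw [fibonacciRelation, map_mul, map_inv, mul_inv_eq_one, hdo]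
    simp only [List.map_map, Function.comp_def]
    rw [FreeGroup.lift_apply_of]
    have hlift : ∀ t : List ℕ,
        (FreeGroup.lift g) ((t.map (fun a : ℕ => FreeGroup.of (i + (a : ZMod m)))).prod)
          = (t.map (fun a : ℕ => g (i + (a : ZMod m)))).prod := by
      intro t
      induction t with
      | nil => simp
      | cons a t ih =>
        rw [List.map_cons, List.map_cons, List.prod_cons, List.prod_cons, map_mul,
          FreeGroup.lift_apply_of, ih]
    rw [hlift]
    have h2 : (List.range r).map (fun a : ℕ => g (i + (a : ZMod m)))
        = (List.range r).map (fun j => seqE r D (i.val + j)) := by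
      refine List.map_congr_left fun j hj => ?_
      have hj' := List.mem_range.mp hj
      exact hgj i j (by omega)
    rw [h2, ← seqE_rec, hgj i r (by omega)]
  refine ⟨PresentedGroup.toGroup hrel, ?_, ?_⟩
  · intro i hi
    rw [PresentedGroup.toGroup.of]
    show seqE r D ((i : ZMod m)).val = D i
    rw [ZMod.val_natCast, Nat.mod_eq_of_lt (by omega), seqE_lt (by omega)]
  · have h1 : (PresentedGroup.toGroup hrel).range = Subgroup.closure (Set.range g) := by
      rw [MonoidHom.range_eq_map, ← PresentedGroup.closure_range_of,
        MonoidHom.map_closure, ← Set.range_comp]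
      have hcomp : ⇑(PresentedGroup.toGroup hrel) ∘ PresentedGroup.of = g :=
        funext fun x => PresentedGroup.toGroup.of hrel
      rw [hcomp]
    rw [h1]
    apply le_antisymm
    · rw [Subgroup.closure_le]
      rintro _ ⟨z, rfl⟩
      exact seqE_mem {x : E1 | ∃ i : ℕ, i ≤ r + 1 - 2 ∧ D i = x} (fun i hi => ⟨i, by omega, rfl⟩) z.val
    · rw [Subgroup.closure_le]
      rintro x ⟨i, hi, rfl⟩
      have hDg : D i ∈ Set.range g := by
        refine ⟨(i : ZMod m), ?_⟩
        show seqE r D ((i : ZMod m)).val = D i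
        rw [ZMod.val_natCast, Nat.mod_eq_of_lt (by omega), seqE_lt (by omega)]
      exact Subgroup.subset_closure hDg
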